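/- Let μ > 0 and M ∈ ℝ, and let A_M be the diffusion wave and φ₀(ξ) = (4πμ)^{−1/2} e^{−ξ²/(4μ)}. Then for all ξ ∈ ℝ, exp(−(1/(2μ)) ∫_{−∞}^ξ A_M(y) dy) = 1 − (1 − e^{−M/(2μ)}) ∫_{−∞}^ξ φ₀(y) dy, and this quantity is bounded below by min{1, e^{−M/(2μ)}} > 0. -/

import Mathlib

open MeasureTheory

/-- The diffusion wave `A_M` with viscosity `μ` and mass `M`:
`A_M(ξ) = α₀ e^{−ξ²/(4μ)} / (1 − (α₀/(2μ)) ∫_{−∞}^ξ e^{−η²/(4μ)} dη)` with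
`α₀ = √(μ/π)(1 − e^{−M/(2μ)})`. -/
noncomputable def AM (μ M ξ : ℝ) : ℝ :=
  Real.sqrt (μ / Real.pi) * (1 - Real.exp (-M / (2 * μ))) * Real.exp (-ξ ^ 2 / (4 * μ)) /
    (1 - Real.sqrt (μ / Real.pi) * (1 - Real.exp (-M / (2 * μ))) / (2 * μ) *
      ∫ η in Set.Iio ξ, Real.exp (-η ^ 2 / (4 * μ)))

/-- The Gaussian `φ₀(ξ) = (4πμ)^{−1/2} e^{−ξ²/(4μ)}`. -/
noncomputable def phi0 (μ ξ : ℝ) : ℝ :=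
  (Real.sqrt (4 * Real.pi * μ))⁻¹ * Real.exp (-ξ ^ 2 / (4 * μ))

section aux

variable (μ M : ℝ) (hμ : 0 < μ)

lemma gauss_eq (hμ : 0 < μ) : ∀ ξ : ℝ, Real.exp (-ξ ^ 2 / (4 * μ)) =
    Real.exp (-(1/(4*μ)) * ξ ^ 2) := by
  intro ξ; congr 1; field_simp

lemma gauss_integrable (hμ : 0 < μ) :
    Integrable (fun η : ℝ => Real.exp (-η ^ 2 / (4 * μ))) := by
  have : (fun η : ℝ => Real.exp (-η ^ 2 / (4 * μ)))
      = fun η : ℝ => Real.exp (-(1/(4*μ)) * η ^ 2) := by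
    funext η; exact gauss_eq μ hμ η
  rw [this]
  exact integrable_exp_neg_mul_sq (by positivity)

lemma gauss_integral (hμ : 0 < μ) :
    (∫ η : ℝ, Real.exp (-η ^ 2 / (4 * μ))) = Real.sqrt (4 * Real.pi * μ) := by
  have : (fun η : ℝ => Real.exp (-η ^ 2 / (4 * μ)))
      = fun η : ℝ => Real.exp (-(1/(4*μ)) * η ^ 2) := by
    funext η; exact gauss_eq μ hμ η
  rw [this, integral_gaussian]
  congr 1
  field_simp

lemma sqrt4pimu_pos (hμ : 0 < μ) : 0 < Real.sqrt (4 * Real.pi * μ) :=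
  Real.sqrt_pos.mpr (by positivity)

lemma phi0_integrable (hμ : 0 < μ) : Integrable (phi0 μ) := by
  unfold phi0
  exact (gauss_integrable μ hμ).const_mul _

lemma phi0_integral (hμ : 0 < μ) : (∫ η : ℝ, phi0 μ η) = 1 := by
  unfold phi0
  rw [integral_const_mul, gauss_integral μ hμ]
  field_simp [(sqrt4pimu_pos μ hμ).ne']

lemma phi0_nonneg : ∀ ξ, 0 ≤ phi0 μ ξ := fun ξ => by
  unfold phi0; positivity

lemma phi0_continuous : Continuous (phi0 μ) := by
  unfold phi0
  fun_prop

/-- key algebraic identity: `√(μ/π) = 2μ/√(4πμ)` -/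
lemma sqrt_key (hμ : 0 < μ) :
    Real.sqrt (μ / Real.pi) = 2 * μ * (Real.sqrt (4 * Real.pi * μ))⁻¹ := by
  have hπ : (0:ℝ) < Real.pi := Real.pi_pos
  have h1 : Real.sqrt (4 * Real.pi * μ) = 2 * (Real.sqrt Real.pi * Real.sqrt μ) := by
    rw [show (4:ℝ) * Real.pi * μ = 2^2 * (Real.pi * μ) by ring,
      Real.sqrt_mul (by positivity), Real.sqrt_sq (by norm_num),
      Real.sqrt_mul hπ.le]
  have h2 : Real.sqrt (μ / Real.pi) = Real.sqrt μ / Real.sqrt Real.pi :=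
    Real.sqrt_div hμ.le Real.pi
  have hsπ : (0:ℝ) < Real.sqrt Real.pi := Real.sqrt_pos.mpr hπ
  have hsμ : (0:ℝ) < Real.sqrt μ := Real.sqrt_pos.mpr hμ
  have hμμ : Real.sqrt μ * Real.sqrt μ = μ := Real.mul_self_sqrt hμ.le
  rw [h1, h2]
  field_simp
  nlinarith [hμμ]

/-- `G ξ = ∫_{Iio ξ} φ₀`. -/
noncomputable def Gf (μ : ℝ) (ξ : ℝ) : ℝ := ∫ y in Set.Iio ξ, phi0 μ y

lemma Gf_eq_Iic (ξ : ℝ) : Gf μ ξ = ∫ y in Set.Iic ξ, phi0 μ y :=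
  setIntegral_congr_set Iio_ae_eq_Iic

lemma Gf_nonneg (hμ : 0 < μ) (ξ : ℝ) : 0 ≤ Gf μ ξ :=
  setIntegral_nonneg measurableSet_Iio fun y _ => phi0_nonneg μ y

lemma Gf_le_one (hμ : 0 < μ) (ξ : ℝ) : Gf μ ξ ≤ 1 := by
  rw [← phi0_integral μ hμ]
  exact setIntegral_le_integral (phi0_integrable μ hμ)
    (Filter.Eventually.of_forall (phi0_nonneg μ))

lemma Gf_hasDerivAt (hμ : 0 < μ) (ξ : ℝ) : HasDerivAt (Gf μ) (phi0 μ ξ) ξ := by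
  have hInt := phi0_integrable μ hμ
  have h0 : ∀ x : ℝ, Gf μ x = (∫ y in Set.Iic (0:ℝ), phi0 μ y)
      + ∫ y in (0:ℝ)..x, phi0 μ y := by
    intro x
    have := intervalIntegral.integral_Iic_sub_Iic (hInt.integrableOn (s := Set.Iic (0:ℝ)))
      (hInt.integrableOn (s := Set.Iic x))
    rw [Gf_eq_Iic]; linarith
  have : HasDerivAt (fun x => (∫ y in Set.Iic (0:ℝ), phi0 μ y)
      + ∫ y in (0:ℝ)..x, phi0 μ y) (phi0 μ ξ) ξ := by
    refine (intervalIntegral.integral_hasDerivAt_right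
      (hInt.intervalIntegrable) ?_ ((phi0_continuous μ).continuousAt)).const_add _
    exact (phi0_continuous μ).stronglyMeasurableAtFilter _ _
  exact this.congr_of_eventuallyEq (Filter.Eventually.of_forall fun x => (h0 x))

lemma Gf_tendsto_atBot (hμ : 0 < μ) : Filter.Tendsto (Gf μ) Filter.atBot (nhds 0) := by
  have hInt := (phi0_integrable μ hμ).integrableOn (s := Set.Iic (0:ℝ))
  have h1 : Filter.Tendsto (fun x : ℝ => ∫ y in x..(0:ℝ), phi0 μ y) Filter.atBot
      (nhds (∫ y in Set.Iic (0:ℝ), phi0 μ y)) :=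
    intervalIntegral_tendsto_integral_Iic 0 hInt Filter.tendsto_id
  have h2 : ∀ x : ℝ, Gf μ x = (∫ y in Set.Iic (0:ℝ), phi0 μ y)
      - ∫ y in x..(0:ℝ), phi0 μ y := by
    intro x
    have := intervalIntegral.integral_Iic_sub_Iic
      ((phi0_integrable μ hμ).integrableOn (s := Set.Iic x))
      ((phi0_integrable μ hμ).integrableOn (s := Set.Iic (0:ℝ)))
    rw [Gf_eq_Iic]; linarith
  have := (tendsto_const_nhds (x := ∫ y in Set.Iic (0:ℝ), phi0 μ y)
      (f := Filter.atBot (α := ℝ))).sub h1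
  rw [sub_self] at this
  exact this.congr fun x => (h2 x).symm

end aux

/-- for all `ξ`,
`exp(−(1/(2μ)) ∫_{−∞}^ξ A_M) = 1 − (1 − e^{−M/(2μ)}) ∫_{−∞}^ξ φ₀`, and this quantity is
bounded below by `min{1, e^{−M/(2μ)}} > 0`. -/
theorem stmt17 (μ M : ℝ) (hμ : 0 < μ) :
    (∀ ξ : ℝ,
      Real.exp (-(1 / (2 * μ)) * ∫ y in Set.Iio ξ, AM μ M y) =
        1 - (1 - Real.exp (-M / (2 * μ))) * ∫ y in Set.Iio ξ, phi0 μ y) ∧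
    (∀ ξ : ℝ,
      min 1 (Real.exp (-M / (2 * μ))) ≤
        1 - (1 - Real.exp (-M / (2 * μ))) * ∫ y in Set.Iio ξ, phi0 μ y) ∧
    0 < min 1 (Real.exp (-M / (2 * μ))) := by
  set c : ℝ := 1 - Real.exp (-M / (2 * μ)) with hc
  set m : ℝ := min 1 (Real.exp (-M / (2 * μ))) with hm
  have hE : 0 < Real.exp (-M / (2 * μ)) := Real.exp_pos _
  have hmpos : 0 < m := lt_min one_pos hE
  -- lower bound part
  have hlow : ∀ ξ : ℝ, m ≤ 1 - c * Gf μ ξ := by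
    intro ξ
    have h0 := Gf_nonneg μ hμ ξ
    have h1 := Gf_le_one μ hμ ξ
    rcases le_total c 0 with h | h
    · have : c * Gf μ ξ ≤ 0 := mul_nonpos_of_nonpos_of_nonneg h h0
      calc m ≤ 1 := min_le_left _ _
        _ ≤ 1 - c * Gf μ ξ := by linarith
    · have : c * Gf μ ξ ≤ c := by nlinarith
      calc m ≤ Real.exp (-M / (2 * μ)) := min_le_right _ _
        _ = 1 - c := by rw [hc]; ring
        _ ≤ 1 - c * Gf μ ξ := by linarith
  have hDpos : ∀ ξ : ℝ, 0 < 1 - c * Gf μ ξ := fun ξ => lt_of_lt_of_le hmpos (hlow ξ)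
  -- rewrite AM in terms of phi0 and Gf
  have hAM : ∀ ξ : ℝ, AM μ M ξ = 2 * μ * (c * phi0 μ ξ) / (1 - c * Gf μ ξ) := by
    intro ξ
    have hg : (∫ η in Set.Iio ξ, Real.exp (-η ^ 2 / (4 * μ)))
        = Real.sqrt (4 * Real.pi * μ) * Gf μ ξ := by
      unfold Gf phi0
      rw [integral_const_mul, ← mul_assoc,
        mul_inv_cancel₀ (sqrt4pimu_pos μ hμ).ne', one_mul]
    have hk := sqrt_key μ hμ
    have hs := (sqrt4pimu_pos μ hμ).ne'
    unfold AM
    rw [hg, hk, ← hc]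
    unfold phi0
    have h2μ : (2 : ℝ) * μ ≠ 0 := by positivity
    congr 1
    · field_simp
    · congr 1
      field_simp
  -- derivative identity
  have hF : ∀ ξ : ℝ, HasDerivAt (fun x => -(2 * μ) * Real.log (1 - c * Gf μ x))
      (AM μ M ξ) ξ := by
    intro ξ
    have hG := Gf_hasDerivAt μ hμ ξ
    have hD : HasDerivAt (fun x => 1 - c * Gf μ x) (-(c * phi0 μ ξ)) ξ := by
      simpa using ((hG.const_mul c).const_sub 1)
    have hlog := (hD.log (hDpos ξ).ne').const_mul (-(2 * μ))
    have key : AM μ M ξ = -(2 * μ) * (-(c * phi0 μ ξ) / (1 - c * Gf μ ξ)) := by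
      rw [hAM ξ]
      field_simp
    rw [key]
    exact hlog
  -- integrability of AM on Iic ξ
  have hAMcont : Continuous (AM μ M) := by
    have hGc : Continuous (Gf μ) :=
      continuous_iff_continuousAt.mpr fun x => (Gf_hasDerivAt μ hμ x).continuousAt
    have hcont : Continuous fun x => 1 - c * Gf μ x :=
      continuous_const.sub (continuous_const.mul hGc)
    have : Continuous fun ξ => 2 * μ * (c * phi0 μ ξ) / (1 - c * Gf μ ξ) :=
      (continuous_const.mul (continuous_const.mul (phi0_continuous μ))).div hcont
        fun x => (hDpos x).ne'
    exact this.congr fun ξ => (hAM ξ).symm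
  have hAMint : ∀ ξ : ℝ, IntegrableOn (AM μ M) (Set.Iic ξ) := by
    intro ξ
    have hbound : Integrable (fun y => 2 * μ * |c| / m * phi0 μ y) :=
      (phi0_integrable μ hμ).const_mul _
    refine Integrable.mono (hbound.restrict (s := Set.Iic ξ))
      (hAMcont.aestronglyMeasurable.restrict) ?_
    filter_upwards with y
    rw [hAM y]
    rw [Real.norm_eq_abs, Real.norm_eq_abs, abs_div]
    have h1 : |1 - c * Gf μ y| = 1 - c * Gf μ y := abs_of_pos (hDpos y)
    rw [h1]
    have h2 : |2 * μ * (c * phi0 μ y)| = 2 * μ * (|c| * phi0 μ y) := by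
      rw [abs_mul, abs_of_pos (by positivity : (0:ℝ) < 2 * μ), abs_mul,
        abs_of_nonneg (phi0_nonneg μ y)]
    have hnum : (0:ℝ) ≤ 2 * μ * (|c| * phi0 μ y) :=
      mul_nonneg (by positivity) (mul_nonneg (abs_nonneg _) (phi0_nonneg μ y))
    have h3 : |2 * μ * (c * phi0 μ y)| / (1 - c * Gf μ y)
        ≤ 2 * μ * (|c| * phi0 μ y) / m := by
      rw [h2]
      exact div_le_div₀ hnum le_rfl hmpos (hlow y)
    have h4 : |2 * μ * |c| / m * phi0 μ y| = 2 * μ * (|c| * phi0 μ y) / m := by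
      rw [abs_of_nonneg (mul_nonneg (div_nonneg (by positivity) hmpos.le)
        (phi0_nonneg μ y))]
      ring
    rw [h4]
    exact h3
  -- tendsto of F at -infty
  have hFtendsto : Filter.Tendsto (fun x => -(2 * μ) * Real.log (1 - c * Gf μ x))
      Filter.atBot (nhds 0) := by
    have h1 : Filter.Tendsto (fun x => 1 - c * Gf μ x) Filter.atBot (nhds 1) := by
      have := (tendsto_const_nhds (x := (1:ℝ)) (f := Filter.atBot (α := ℝ))).sub
        ((Gf_tendsto_atBot μ hμ).const_mul c)
      simpa using this
    have h2 : Filter.Tendsto (fun x => Real.log (1 - c * Gf μ x)) Filter.atBot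
        (nhds 0) := by
      have := (Real.continuousAt_log one_ne_zero).tendsto.comp h1
      simpa [Real.log_one, Function.comp_def] using this
    have := h2.const_mul (-(2 * μ))
    simpa using this
  -- main identity
  have hmain : ∀ ξ : ℝ, Real.exp (-(1 / (2 * μ)) * ∫ y in Set.Iio ξ, AM μ M y)
      = 1 - c * Gf μ ξ := by
    intro ξ
    have hInt : (∫ y in Set.Iio ξ, AM μ M y) = ∫ y in Set.Iic ξ, AM μ M y :=
      setIntegral_congr_set Iio_ae_eq_Iic
    have hFTC := integral_Iic_of_hasDerivAt_of_tendsto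
      (f := fun x => -(2 * μ) * Real.log (1 - c * Gf μ x)) (f' := AM μ M) (a := ξ)
      (m := 0)
      ((continuous_const.mul (Real.continuousOn_log.comp_continuous
        (continuous_const.sub (continuous_const.mul (continuous_iff_continuousAt.mpr fun x =>
          (Gf_hasDerivAt μ hμ x).continuousAt)))
        (fun x => (hDpos x).ne'))).continuousWithinAt)
      (fun x _ => hF x) (hAMint ξ) hFtendsto
    rw [hInt, hFTC, sub_zero]
    have h2μ : (2 : ℝ) * μ ≠ 0 := by positivity
    rw [show -(1 / (2 * μ)) * (-(2 * μ) * Real.log (1 - c * Gf μ ξ))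
        = Real.log (1 - c * Gf μ ξ) by field_simp]
    exact Real.exp_log (hDpos ξ)
  exact ⟨fun ξ => hmain ξ, fun ξ => hlow ξ, hmpos⟩
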